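/- Let n ≥ 1, k ≥ 1 and let a1 > a2 ≥ 1 be integers. Then the limit as m → ∞ of [C(m·a1−k+n, n)·C(m·a2+k−1, n) − C(m·a1+n, n)·C(m·a2−1, n)] / m^{2n−1} exists and equals n·k·a1^{n−1}·a2^{n−1}·(a1−a2)/(n!)^2, where C(·,·) denotes the binomial coefficient. In particular, the dimension of V_{m·a1−k, m·a2+k−(n+1)} exceeds the dimension of V_{m·a1, m·a2−(n+1)} by a quantity of exact growth order m^{2n−1}. -/

import Mathlib

open MvPolynomial

open Finset in
private lemma telescope_prod (N : ℕ) (u v : ℕ → ℝ) :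
    (∏ j ∈ range N, u j) - (∏ j ∈ range N, v j)
      = ∑ j ∈ range N, (u j - v j) * (∏ i ∈ range j, u i) * (∏ i ∈ Ico (j+1) N, v i) := by
  induction N with
  | zero => simp
  | succ N ih =>
    rw [prod_range_succ, prod_range_succ, sum_range_succ]
    have h : ∀ j ∈ range N,
        (u j - v j) * (∏ i ∈ range j, u i) * (∏ i ∈ Ico (j+1) (N+1), v i)
        = ((u j - v j) * (∏ i ∈ range j, u i) * (∏ i ∈ Ico (j+1) N, v i)) * v N := by
      intro j hj
      have hjN := Finset.mem_range.mp hj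
      rw [prod_Ico_succ_top (by omega : j + 1 ≤ N)]
      ring
    rw [Finset.sum_congr rfl h, ← Finset.sum_mul, ← ih]
    simp [Finset.Ico_self]
    ring

private lemma choose_cast_prod (N n : ℕ) (h : n ≤ N) :
    (N.choose n : ℝ) * (Nat.factorial n : ℝ) = ∏ i ∈ Finset.range n, ((N : ℝ) - i) := by
  have h2 : (N.choose n : ℝ) * (Nat.factorial n : ℝ) = ((N.descFactorial n : ℕ) : ℝ) := by
    rw [Nat.descFactorial_eq_factorial_mul_choose]; push_cast; ring
  rw [h2, Nat.descFactorial_eq_prod_range, Nat.cast_prod]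
  refine Finset.prod_congr rfl fun i hi => ?_
  have hiN : i ≤ N := le_trans (le_of_lt (Finset.mem_range.mp hi)) h
  rw [Nat.cast_sub hiN]

noncomputable def cf (n a1 a2 : ℕ) : ℕ → ℝ := fun j => if j < n then (a1:ℝ) else (a2:ℝ)
noncomputable def df (n k : ℕ) : ℕ → ℝ := fun j => if j < n then (n:ℝ) - j - k else (n:ℝ) + k - 1 - j
noncomputable def ef (n : ℕ) : ℕ → ℝ := fun j => if j < n then (n:ℝ) - j else (n:ℝ) - 1 - j

noncomputable def Sf (n k a1 a2 : ℕ) : ℝ → ℝ := fun t =>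
  ∑ j ∈ Finset.range (2*n), (df n k j - ef n j) *
    (∏ i ∈ Finset.range j, (cf n a1 a2 i + df n k i * t)) *
    (∏ i ∈ Finset.Ico (j+1) (2*n), (cf n a1 a2 i + ef n i * t))

private lemma Sf_continuous (n k a1 a2 : ℕ) : Continuous (Sf n k a1 a2) := by
  unfold Sf
  apply continuous_finset_sum
  intro j _
  exact ((continuous_const.mul (continuous_finset_prod _ fun i _ => by fun_prop)).mul
    (continuous_finset_prod _ fun i _ => by fun_prop))

private lemma Sf_zero (n k a1 a2 : ℕ) (hn : 1 ≤ n) :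
    Sf n k a1 a2 0 = (n:ℝ) * k * (a1:ℝ)^(n-1) * (a2:ℝ)^(n-1) * ((a1:ℝ) - (a2:ℝ)) := by
  have key : ∀ j ∈ Finset.range (2*n),
      (df n k j - ef n j) *
        (∏ i ∈ Finset.range j, (cf n a1 a2 i + df n k i * 0)) *
        (∏ i ∈ Finset.Ico (j+1) (2*n), (cf n a1 a2 i + ef n i * 0))
      = if j < n then -(k:ℝ) * (a1:ℝ)^(n-1) * (a2:ℝ)^n
        else (k:ℝ) * (a1:ℝ)^n * (a2:ℝ)^(n-1) := by
    intro j hj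
    have hj2 : j < 2*n := Finset.mem_range.mp hj
    simp only [mul_zero, add_zero]
    by_cases hjn : j < n
    · have h1 : (∏ i ∈ Finset.range j, cf n a1 a2 i) = (a1:ℝ)^j := by
        rw [Finset.prod_congr rfl (fun i hi => ?_), Finset.prod_const, Finset.card_range]
        have : i < n := lt_of_lt_of_le (Finset.mem_range.mp hi) (le_of_lt hjn)
        simp [cf, this]
      have h2 : (∏ i ∈ Finset.Ico (j+1) (2*n), cf n a1 a2 i)
          = (a1:ℝ)^(n-(j+1)) * (a2:ℝ)^n := by
        rw [← Finset.prod_Ico_consecutive _ (by omega : j+1 ≤ n) (by omega : n ≤ 2*n)]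
        congr 1
        · rw [Finset.prod_congr rfl (fun i hi => ?_), Finset.prod_const, Nat.card_Ico]
          have : i < n := (Finset.mem_Ico.mp hi).2
          simp [cf, this]
        · rw [Finset.prod_congr rfl (fun i hi => ?_), Finset.prod_const, Nat.card_Ico,
            (by omega : 2*n - n = n)]
          have : ¬ i < n := by have := (Finset.mem_Ico.mp hi).1; omega
          simp [cf, this]
      have h3 : df n k j - ef n j = -(k:ℝ) := by simp only [df, ef, if_pos hjn]; ring
      rw [h1, h2, h3, if_pos hjn]
      have : (a1:ℝ)^j * (a1:ℝ)^(n-(j+1)) = (a1:ℝ)^(n-1) := by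
        rw [← pow_add]; congr 1; omega
      calc -(k:ℝ) * (a1:ℝ)^j * ((a1:ℝ)^(n-(j+1)) * (a2:ℝ)^n)
          = -(k:ℝ) * ((a1:ℝ)^j * (a1:ℝ)^(n-(j+1))) * (a2:ℝ)^n := by ring
        _ = -(k:ℝ) * (a1:ℝ)^(n-1) * (a2:ℝ)^n := by rw [this]
    · have h1 : (∏ i ∈ Finset.range j, cf n a1 a2 i) = (a1:ℝ)^n * (a2:ℝ)^(j-n) := by
        rw [Finset.range_eq_Ico,
          ← Finset.prod_Ico_consecutive _ (by omega : 0 ≤ n) (by omega : n ≤ j)]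
        congr 1
        · rw [Finset.prod_congr rfl (fun i hi => ?_), Finset.prod_const, Nat.card_Ico,
            (by omega : n - 0 = n)]
          have : i < n := (Finset.mem_Ico.mp hi).2
          simp [cf, this]
        · rw [Finset.prod_congr rfl (fun i hi => ?_), Finset.prod_const, Nat.card_Ico]
          have : ¬ i < n := by have := (Finset.mem_Ico.mp hi).1; omega
          simp [cf, this]
      have h2 : (∏ i ∈ Finset.Ico (j+1) (2*n), cf n a1 a2 i) = (a2:ℝ)^(2*n-(j+1)) := by
        rw [Finset.prod_congr rfl (fun i hi => ?_), Finset.prod_const, Nat.card_Ico]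
        have : ¬ i < n := by have := (Finset.mem_Ico.mp hi).1; omega
        simp [cf, this]
      have h3 : df n k j - ef n j = (k:ℝ) := by simp only [df, ef, if_neg hjn]; ring
      rw [h1, h2, h3, if_neg hjn]
      have : (a2:ℝ)^(j-n) * (a2:ℝ)^(2*n-(j+1)) = (a2:ℝ)^(n-1) := by
        rw [← pow_add]; congr 1; omega
      calc (k:ℝ) * ((a1:ℝ)^n * (a2:ℝ)^(j-n)) * (a2:ℝ)^(2*n-(j+1))
          = (k:ℝ) * (a1:ℝ)^n * ((a2:ℝ)^(j-n) * (a2:ℝ)^(2*n-(j+1))) := by ring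
        _ = (k:ℝ) * (a1:ℝ)^n * (a2:ℝ)^(n-1) := by rw [this]
  rw [Sf, Finset.sum_congr rfl key, (by ring : 2*n = n + n), Finset.sum_range_add]
  have hA : ∀ i ∈ Finset.range n,
      (if i < n then -(k:ℝ) * (a1:ℝ)^(n-1) * (a2:ℝ)^n else (k:ℝ) * (a1:ℝ)^n * (a2:ℝ)^(n-1))
      = -(k:ℝ) * (a1:ℝ)^(n-1) * (a2:ℝ)^n := by
    intro i hi; rw [if_pos (Finset.mem_range.mp hi)]
  have hB : ∀ i ∈ Finset.range n,
      (if n + i < n then -(k:ℝ) * (a1:ℝ)^(n-1) * (a2:ℝ)^n else (k:ℝ) * (a1:ℝ)^n * (a2:ℝ)^(n-1))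
      = (k:ℝ) * (a1:ℝ)^n * (a2:ℝ)^(n-1) := by
    intro i hi; rw [if_neg (by omega)]
  rw [Finset.sum_congr rfl hA, Finset.sum_congr rfl hB, Finset.sum_const, Finset.sum_const,
    Finset.card_range, nsmul_eq_mul, nsmul_eq_mul]
  have e1 : (a1:ℝ)^n = (a1:ℝ)^(n-1) * a1 := by
    rw [← pow_succ]; congr 1; omega
  have e2 : (a2:ℝ)^n = (a2:ℝ)^(n-1) * a2 := by
    rw [← pow_succ]; congr 1; omega
  rw [e1, e2]; ring

/-- For `a1 > a2 ≥ 1`, the difference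
`C(m·a1−k+n, n)·C(m·a2+k−1, n) − C(m·a1+n, n)·C(m·a2−1, n)` (the amount by which the
dimension of `V_{m·a1−k, m·a2+k−(n+1)}` exceeds that of `V_{m·a1, m·a2−(n+1)}`), divided
by `m^{2n−1}`, converges to `n·k·a1^{n−1}·a2^{n−1}·(a1−a2)/(n!)^2` as `m → ∞`. -/
theorem dimension_difference_growth (n k a1 a2 : ℕ)
    (hn : 1 ≤ n) (hk : 1 ≤ k) (ha2 : 1 ≤ a2) (h12 : a2 < a1) :
    Filter.Tendsto
      (fun m : ℕ =>
        (((Nat.choose (m * a1 - k + n) n * Nat.choose (m * a2 + k - 1) n : ℕ) : ℝ)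
          - ((Nat.choose (m * a1 + n) n * Nat.choose (m * a2 - 1) n : ℕ) : ℝ))
        / (m : ℝ) ^ (2 * n - 1))
      Filter.atTop
      (nhds ((n : ℝ) * (k : ℝ) * (a1 : ℝ) ^ (n - 1) * (a2 : ℝ) ^ (n - 1)
        * ((a1 : ℝ) - (a2 : ℝ)) / ((Nat.factorial n : ℝ)) ^ 2)) := by
  have hF : ((Nat.factorial n : ℝ))^2 ≠ 0 :=
    pow_ne_zero _ (Nat.cast_ne_zero.mpr (Nat.factorial_ne_zero n))
  have hbase : Filter.Tendsto (fun m : ℕ => Sf n k a1 a2 (1/(m:ℝ)) / ((Nat.factorial n : ℝ))^2)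
      Filter.atTop (nhds (Sf n k a1 a2 0 / ((Nat.factorial n : ℝ))^2)) :=
    (((Sf_continuous n k a1 a2).tendsto 0).comp tendsto_one_div_atTop_nhds_zero_nat).div_const _
  rw [Sf_zero n k a1 a2 hn] at hbase
  refine Filter.Tendsto.congr' ?_ hbase
  rw [Filter.eventuallyEq_iff_exists_mem]
  refine ⟨{m | n + k + 1 ≤ m}, Filter.mem_atTop _, fun m hm => ?_⟩
  simp only [Set.mem_setOf_eq] at hm
  have hm1 : 1 ≤ m := by omega
  have hmne : (m:ℝ) ≠ 0 := Nat.cast_ne_zero.mpr (by omega)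
  set t : ℝ := 1/(m:ℝ) with ht
  -- cast facts
  have hka1 : k ≤ m * a1 := le_trans (by omega) (Nat.le_mul_of_pos_right m (by omega))
  have hma2 : n + 1 ≤ m * a2 := le_trans (by omega) (Nat.le_mul_of_pos_right m (by omega))
  -- the four factorizations
  have hA : (((m * a1 - k + n).choose n : ℕ) : ℝ) * (Nat.factorial n : ℝ)
      = ∏ j ∈ Finset.range n, (cf n a1 a2 j * m + df n k j) := by
    rw [choose_cast_prod _ _ (by omega)]
    refine Finset.prod_congr rfl fun j hj => ?_
    have hjn : j < n := Finset.mem_range.mp hj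
    rw [Nat.cast_add, Nat.cast_sub hka1]
    simp only [cf, df, if_pos hjn]
    push_cast; ring
  have hB : (((m * a2 + k - 1).choose n : ℕ) : ℝ) * (Nat.factorial n : ℝ)
      = ∏ j ∈ Finset.range n, (cf n a1 a2 (n + j) * m + df n k (n + j)) := by
    rw [choose_cast_prod _ _ (by omega)]
    refine Finset.prod_congr rfl fun j hj => ?_
    have hjn : j < n := Finset.mem_range.mp hj
    rw [Nat.cast_sub (by omega : 1 ≤ m * a2 + k)]
    simp only [cf, df, if_neg (by omega : ¬ n + j < n)]
    push_cast; ring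
  have hC : (((m * a1 + n).choose n : ℕ) : ℝ) * (Nat.factorial n : ℝ)
      = ∏ j ∈ Finset.range n, (cf n a1 a2 j * m + ef n j) := by
    rw [choose_cast_prod _ _ (by omega)]
    refine Finset.prod_congr rfl fun j hj => ?_
    have hjn : j < n := Finset.mem_range.mp hj
    simp only [cf, ef, if_pos hjn]
    push_cast; ring
  have hD : (((m * a2 - 1).choose n : ℕ) : ℝ) * (Nat.factorial n : ℝ)
      = ∏ j ∈ Finset.range n, (cf n a1 a2 (n + j) * m + ef n (n + j)) := by
    rw [choose_cast_prod _ _ (by omega)]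
    refine Finset.prod_congr rfl fun j hj => ?_
    have hjn : j < n := Finset.mem_range.mp hj
    rw [Nat.cast_sub (by omega : 1 ≤ m * a2)]
    simp only [cf, ef, if_neg (by omega : ¬ n + j < n)]
    push_cast; ring
  -- factor out m from the products
  have hfac : ∀ dd : ℕ → ℝ,
      ∏ j ∈ Finset.range (2*n), (cf n a1 a2 j * m + dd j)
      = (m:ℝ)^(2*n) * ∏ j ∈ Finset.range (2*n), (cf n a1 a2 j + dd j * t) := by
    intro dd
    have : ∀ j ∈ Finset.range (2*n),
        cf n a1 a2 j * m + dd j = (m:ℝ) * (cf n a1 a2 j + dd j * t) := by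
      intro j _
      rw [ht]; field_simp
    rw [Finset.prod_congr rfl this, Finset.prod_mul_distrib, Finset.prod_const,
      Finset.card_range]
  -- telescoping identity
  have htel : (∏ j ∈ Finset.range (2*n), (cf n a1 a2 j + df n k j * t))
      - (∏ j ∈ Finset.range (2*n), (cf n a1 a2 j + ef n j * t))
      = t * Sf n k a1 a2 t := by
    rw [telescope_prod, Sf, Finset.mul_sum]
    refine Finset.sum_congr rfl fun j _ => ?_
    ring
  -- put everything together
  have e1 : (((m * a1 - k + n).choose n * (m * a2 + k - 1).choose n : ℕ) : ℝ)
      * ((Nat.factorial n : ℝ))^2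
      = (m:ℝ)^(2*n) * ∏ j ∈ Finset.range (2*n), (cf n a1 a2 j + df n k j * t) := by
    rw [← hfac, (by ring : 2*n = n + n), Finset.prod_range_add]
    push_cast
    rw [← hA, ← hB]; ring
  have e2 : (((m * a1 + n).choose n * (m * a2 - 1).choose n : ℕ) : ℝ)
      * ((Nat.factorial n : ℝ))^2
      = (m:ℝ)^(2*n) * ∏ j ∈ Finset.range (2*n), (cf n a1 a2 j + ef n j * t) := by
    rw [← hfac, (by ring : 2*n = n + n), Finset.prod_range_add]
    push_cast
    rw [← hC, ← hD]; ring
  have hpow : (m:ℝ)^(2*n) * t = (m:ℝ)^(2*n-1) := by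
    rw [ht, (by omega : 2*n = (2*n-1)+1), pow_succ]
    field_simp
    rw [Nat.add_sub_cancel]
  have key : ((((m * a1 - k + n).choose n * (m * a2 + k - 1).choose n : ℕ) : ℝ)
      - (((m * a1 + n).choose n * (m * a2 - 1).choose n : ℕ) : ℝ))
      * ((Nat.factorial n : ℝ))^2
      = (m:ℝ)^(2*n-1) * Sf n k a1 a2 t := by
    rw [sub_mul, e1, e2, ← mul_sub, htel, ← mul_assoc, hpow]
  have fin : ((((m * a1 - k + n).choose n * (m * a2 + k - 1).choose n : ℕ) : ℝ)
      - (((m * a1 + n).choose n * (m * a2 - 1).choose n : ℕ) : ℝ)) / (m:ℝ)^(2*n-1)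
      = Sf n k a1 a2 t / ((Nat.factorial n : ℝ))^2 := by
    rw [div_eq_div_iff (pow_ne_zero _ hmne) hF]
    linear_combination key
  exact fin.symm
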